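/- Let Σ̂, Λ̂ ∈ ℝ^{p×p} be symmetric with Λ̂ positive definite, and let β̂₁, …, β̂_p be generalized eigenvectors satisfying Σ̂β̂_j = ρ̂_j Λ̂β̂_j with β̂_i⊤Σ̂β̂_j = ρ̂_i·1{i=j} and ρ̂₁ ≥ … ≥ ρ̂_p > 0. Define the Schur-complement deflated matrices Σ̃₁ = Σ̂ and Σ̃_{ℓ+1} = Σ̃_ℓ - (Σ̃_ℓ β̂_ℓ β̂_ℓ⊤ Σ̃_ℓ)/(β̂_ℓ⊤Σ̃_ℓβ̂_ℓ). Then for each k: (a) Σ̃_{k+1} β̂_j = 0 for all j ≤ k; (b) Σ̃_{k+1} β̂_j = Σ̂ β̂_j for all j ≥ k+1; and consequently (c) the pair (ρ̂_{k+1}, β̂_{k+1}) is the leading generalized eigenvalue-eigenvector pair of the deflated problem max_β (β⊤Σ̃_{k+1}β)/(β⊤Λ̂β). -/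

import Mathlib

open Finset Real Matrix

private lemma sum_dotProduct' {n : ℕ} {ι : Type*} (s : Finset ι) (f : ι → Fin n → ℝ)
    (v : Fin n → ℝ) : (∑ i ∈ s, f i) ⬝ᵥ v = ∑ i ∈ s, f i ⬝ᵥ v := by
  simp only [dotProduct, Finset.sum_apply, Finset.sum_mul]
  exact Finset.sum_comm

private lemma dotProduct_sum' {n : ℕ} {ι : Type*} (s : Finset ι) (v : Fin n → ℝ)
    (f : ι → Fin n → ℝ) : v ⬝ᵥ (∑ i ∈ s, f i) = ∑ i ∈ s, v ⬝ᵥ f i := by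
  simp only [dotProduct, Finset.sum_apply, Finset.mul_sum]
  exact Finset.sum_comm

private lemma vecMulVec_mulVec' {p : ℕ} (w v x : Fin p → ℝ) :
    (Matrix.vecMulVec w v) *ᵥ x = (v ⬝ᵥ x) • w := by
  ext i
  simp [Matrix.vecMulVec, Matrix.mulVec, dotProduct, Finset.mul_sum, mul_comm,
    mul_assoc, mul_left_comm]

/-- Proposition (deflation): Let `β̂_j` be generalized eigenvectors of the pencil `(Σ̂, Λ̂)`
with `Σ̂β̂_j = ρ̂_j Λ̂β̂_j`, `β̂_i⊤Σ̂β̂_j = ρ̂_i·1{i=j}`, `ρ̂₁ ≥ … ≥ ρ̂_p > 0`, and let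
`Σ̃₁ = Σ̂`, `Σ̃_{ℓ+1} = Σ̃_ℓ - Σ̃_ℓβ̂_ℓβ̂_ℓ⊤Σ̃_ℓ/(β̂_ℓ⊤Σ̃_ℓβ̂_ℓ)` be the Schur-complement
deflations. Then (a) `Σ̃_{k+1}β̂_j = 0` for `j ≤ k`; (b) `Σ̃_{k+1}β̂_j = Σ̂β̂_j` for
`j ≥ k+1`; (c) `(ρ̂_{k+1}, β̂_{k+1})` is the leading generalized eigenpair of
`(Σ̃_{k+1}, Λ̂)`. (Indices are 0-based: `T 0 = Σ̂` plays the role of `Σ̃₁`.) -/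
theorem schur_deflation_eigenpairs {p : ℕ}
    (S Λm : Matrix (Fin p) (Fin p) ℝ)
    (hSsym : S.IsSymm) (hΛsym : Λm.IsSymm)
    (hΛpd : ∀ x : Fin p → ℝ, x ≠ 0 → 0 < x ⬝ᵥ (Λm *ᵥ x))
    (βh : Fin p → Fin p → ℝ) (ρ : Fin p → ℝ)
    (heig : ∀ j, S *ᵥ βh j = ρ j • (Λm *ᵥ βh j))
    (hnorm : ∀ i j, βh i ⬝ᵥ (S *ᵥ βh j) = if i = j then ρ i else 0)
    (hmono : ∀ i j : Fin p, i ≤ j → ρ j ≤ ρ i)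
    (hpos : ∀ j, 0 < ρ j)
    (T : ℕ → Matrix (Fin p) (Fin p) ℝ)
    (hT0 : T 0 = S)
    (hTs : ∀ ℓ, ∀ h : ℓ < p,
      T (ℓ + 1) = T ℓ -
        (1 / (βh ⟨ℓ, h⟩ ⬝ᵥ (T ℓ *ᵥ βh ⟨ℓ, h⟩))) •
          Matrix.vecMulVec (T ℓ *ᵥ βh ⟨ℓ, h⟩) (Matrix.vecMul (βh ⟨ℓ, h⟩) (T ℓ)))
    (k : ℕ) (hk : k + 1 < p) :
    (∀ j : Fin p, (j : ℕ) ≤ k → T (k + 1) *ᵥ βh j = 0) ∧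
    (∀ j : Fin p, k + 1 ≤ (j : ℕ) → T (k + 1) *ᵥ βh j = S *ᵥ βh j) ∧
    (T (k + 1) *ᵥ βh ⟨k + 1, hk⟩ = ρ ⟨k + 1, hk⟩ • (Λm *ᵥ βh ⟨k + 1, hk⟩) ∧
      ∀ β : Fin p → ℝ, β ≠ 0 →
        (β ⬝ᵥ (T (k + 1) *ᵥ β)) / (β ⬝ᵥ (Λm *ᵥ β)) ≤ ρ ⟨k + 1, hk⟩) := by
  -- Λ-orthonormality of the βh
  have hΛβ : ∀ i j, βh i ⬝ᵥ (Λm *ᵥ βh j) = if i = j then 1 else 0 := by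
    intro i j
    have h1 := hnorm i j
    rw [heig j, dotProduct_smul, smul_eq_mul] at h1
    rcases eq_or_ne i j with rfl | hne
    · simp only [if_pos rfl] at h1 ⊢
      have := (hpos i).ne'
      field_simp at h1
      simp only [if_true, ↓reduceIte] at h1 ⊢
      exact mul_left_cancel₀ this (h1.trans (mul_one _).symm)
    · simp only [if_neg hne] at h1 ⊢
      exact (mul_eq_zero.mp h1).resolve_left (hpos j).ne'
  -- main induction
  have key : ∀ m, m ≤ p →
      (∀ j : Fin p, (j : ℕ) < m → T m *ᵥ βh j = 0) ∧
      (∀ j : Fin p, m ≤ (j : ℕ) → T m *ᵥ βh j = S *ᵥ βh j) := by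
    intro m
    induction m with
    | zero =>
      exact fun _ => ⟨fun j hj => absurd hj (Nat.not_lt_zero _), fun j _ => by rw [hT0]⟩
    | succ ℓ ih =>
      intro hm
      have hℓp : ℓ < p := hm
      obtain ⟨ih0, ihid⟩ := ih (Nat.le_of_lt hℓp)
      set v := βh ⟨ℓ, hℓp⟩ with hv
      have hTv : T ℓ *ᵥ v = S *ᵥ v := ihid ⟨ℓ, hℓp⟩ le_rfl
      have hd : v ⬝ᵥ (T ℓ *ᵥ v) = ρ ⟨ℓ, hℓp⟩ := by rw [hTv, hv, hnorm]; simp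
      have hdne : v ⬝ᵥ (T ℓ *ᵥ v) ≠ 0 := by rw [hd]; exact (hpos _).ne'
      have hb : ∀ x, T (ℓ + 1) *ᵥ x =
          T ℓ *ᵥ x - ((1 / (v ⬝ᵥ (T ℓ *ᵥ v))) * (v ⬝ᵥ (T ℓ *ᵥ x))) • (T ℓ *ᵥ v) := by
        intro x
        rw [hTs ℓ hℓp, Matrix.sub_mulVec, Matrix.smul_mulVec, vecMulVec_mulVec',
          ← Matrix.dotProduct_mulVec, smul_smul]
      constructor
      · intro j hj
        rcases Nat.lt_or_ge (j : ℕ) ℓ with hjl | hjl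
        · rw [hb, ih0 j hjl]; simp
        · have hjeq : j = ⟨ℓ, hℓp⟩ :=
            Fin.ext (le_antisymm (Nat.lt_succ_iff.mp hj) hjl)
          rw [hjeq, ← hv, hb, one_div, inv_mul_cancel₀ hdne, one_smul, sub_self]
      · intro j hj
        have hne : (⟨ℓ, hℓp⟩ : Fin p) ≠ j := by
          intro h
          rw [← h] at hj
          exact absurd hj (by simp)
        have hz : v ⬝ᵥ (S *ᵥ βh j) = 0 := by rw [hv, hnorm, if_neg hne]
        rw [hb, ihid j (Nat.le_of_succ_le hj), hz, mul_zero, zero_smul, sub_zero]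
  obtain ⟨ka, kb⟩ := key (k + 1) (Nat.le_of_lt hk)
  refine ⟨fun j hj => ka j (Nat.lt_succ_of_le hj), kb, ?_, ?_⟩
  · rw [kb ⟨k + 1, hk⟩ le_rfl, heig]
  -- part (c): the max bound
  have hp0 : 0 < p := Nat.lt_of_le_of_lt (Nat.zero_le _) hk
  haveI : Nonempty (Fin p) := ⟨⟨0, hp0⟩⟩
  have hdotΛ : ∀ (g : Fin p → ℝ) (j : Fin p),
      (∑ i, g i • βh i) ⬝ᵥ (Λm *ᵥ βh j) = g j := by
    intro g j
    rw [sum_dotProduct']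
    simp [smul_dotProduct, hΛβ, mul_ite]
  have hli : LinearIndependent ℝ βh := by
    rw [Fintype.linearIndependent_iff]
    intro g hg i
    have h2 := hdotΛ g i
    rw [hg] at h2
    simpa using h2.symm
  have hcard : Fintype.card (Fin p) = Module.finrank ℝ (Fin p → ℝ) := by simp
  let b := basisOfLinearIndependentOfCardEqFinrank hli hcard
  have hbco : ⇑b = βh := coe_basisOfLinearIndependentOfCardEqFinrank _ _
  intro β hβ
  set c : Fin p → ℝ := fun i => b.repr β i with hc
  have hβeq : β = ∑ i, c i • βh i := by
    conv_lhs => rw [← b.sum_repr β]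
    rw [hbco]
  have hmvsum : ∀ (M : Matrix (Fin p) (Fin p) ℝ), M *ᵥ β = ∑ i, c i • (M *ᵥ βh i) := by
    intro M
    calc M *ᵥ β = M.mulVecLin (∑ i, c i • βh i) := by rw [Matrix.mulVecLin_apply, ← hβeq]
    _ = ∑ i, c i • (M *ᵥ βh i) := by rw [map_sum]; simp
  have hβΛ : ∀ j, β ⬝ᵥ (Λm *ᵥ βh j) = c j := by
    intro j
    rw [hβeq]; exact hdotΛ c j
  have hΛval : β ⬝ᵥ (Λm *ᵥ β) = ∑ i, c i ^ 2 := by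
    rw [hmvsum Λm, dotProduct_sum']
    simp only [dotProduct_smul, smul_eq_mul, hβΛ]
    exact Finset.sum_congr rfl fun i _ => by ring
  have hTval : β ⬝ᵥ (T (k + 1) *ᵥ β)
      = ∑ i : Fin p, (if k + 1 ≤ (i : ℕ) then ρ i * c i ^ 2 else 0) := by
    rw [hmvsum (T (k + 1)), dotProduct_sum']
    simp only [dotProduct_smul, smul_eq_mul]
    refine Finset.sum_congr rfl fun i _ => ?_
    by_cases hi : k + 1 ≤ (i : ℕ)
    · rw [if_pos hi, kb i hi, heig, dotProduct_smul, smul_eq_mul, hβΛ]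
      ring
    · rw [if_neg hi, ka i (Nat.not_le.mp hi)]
      simp
  have hΛposval : 0 < β ⬝ᵥ (Λm *ᵥ β) := hΛpd β hβ
  rw [div_le_iff₀ hΛposval, hTval, hΛval, Finset.mul_sum]
  refine Finset.sum_le_sum fun i _ => ?_
  by_cases hi : k + 1 ≤ (i : ℕ)
  · rw [if_pos hi]
    have h1 : ρ i ≤ ρ ⟨k + 1, hk⟩ := hmono ⟨k + 1, hk⟩ i (by simpa [Fin.le_def] using hi)
    exact mul_le_mul_of_nonneg_right h1 (sq_nonneg _)
  · rw [if_neg hi]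
    exact mul_nonneg (hpos _).le (sq_nonneg _)
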